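/- Let $A$ be a unital associative ring, let $k > 1$ be an integer, and let $\sigma$ be a permutation of the set $\{1, 2, 3, 4\}$. Then for all $g_1, \dots, g_{k-1}, f_1, f_2, f_3, f_4 \in A$, the element $[g_1, \dots, g_{k-1}, f_{\sigma(1)}][f_{\sigma(2)}, f_{\sigma(3)}, f_{\sigma(4)}] - (-1)^{\sigma}\,[g_1, \dots, g_{k-1}, f_1][f_2, f_3, f_4]$ belongs to $T^{(k+2)}(A)$, where $(-1)^{\sigma}$ denotes the sign of $\sigma$. -/

import Mathlib

/-- The ring commutator `[a, b] = a * b - b * a`. -/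
def brk {A : Type*} [NonUnitalNonAssocRing A] (a b : A) : A := a * b - b * a

/-- The left-normed commutator `[a 0, a 1, ..., a (k-1)]`. -/
def lnc {A : Type*} [NonUnitalNonAssocRing A] : ∀ {k : ℕ}, (Fin k → A) → A
  | 0, _ => 0
  | 1, a => a 0
  | k + 2, a => brk (lnc (Fin.init a)) (a (Fin.last (k + 1)))

/-- `T A m` is the two-sided ideal of `A` generated by all left-normed commutators
of length `m` (for `m = 1` this is all of `A`). -/
def T (A : Type*) [NonUnitalNonAssocRing A] (m : ℕ) : TwoSidedIdeal A :=
  TwoSidedIdeal.span {x | ∃ a : Fin m → A, x = lnc a}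
lemma E01_mem {A : Type*} [Ring A] (I : TwoSidedIdeal A) (u a b c d : A)
    (h : ∀ x y z : A, brk (brk (brk u x) y) z ∈ I) :
    brk u a * brk (brk b c) d + brk u b * brk (brk a c) d ∈ I := by
  have cert : brk u a * brk (brk b c) d + brk u b * brk (brk a c) d =
      1 * (brk (brk (brk u a) b) c * d) +
      -(1 * (brk (brk (brk u a) c) b * d)) +
      d * (brk (brk (brk u a) c) b * 1) +
      1 * (brk (brk (brk u b) a) c * d) +
      1 * (brk (brk (brk u b) a) c * d) +
      -(d * (brk (brk (brk u b) a) c * 1)) +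
      -(1 * (brk (brk (brk u b) c) a * d)) +
      d * (brk (brk (brk u b) c) a * 1) +
      1 * (brk (brk (brk u a) b) d * c) +
      -(1 * (brk (brk (brk u a) d) b * c)) +
      c * (brk (brk (brk u a) d) b * 1) +
      1 * (brk (brk (brk u b) a) d * c) +
      -(1 * (brk (brk (brk u b) d) a * c)) +
      c * (brk (brk (brk u b) d) a * 1) +
      1 * (brk (brk (brk u a) d) c * b) +
      1 * (brk (brk (brk u b) d) c * a) +
      1 * (brk (brk (brk u (a * b)) c) d * 1) +
      -(1 * (brk (brk (brk u a) (b * c)) d * 1)) +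
      -(1 * (brk (brk (brk u a) (b * d)) c * 1)) +
      -(1 * (brk (brk (brk u b) (a * c)) d * 1)) +
      -(1 * (brk (brk (brk u b) (a * d)) c * 1)) := by
    simp only [brk]; noncomm_ring
  rw [cert]
  exact I.add_mem (I.add_mem (I.add_mem (I.add_mem (I.add_mem (I.add_mem (I.add_mem (I.add_mem (I.add_mem (I.add_mem (I.add_mem (I.add_mem (I.add_mem (I.add_mem (I.add_mem (I.add_mem (I.add_mem (I.add_mem (I.add_mem (I.add_mem (I.mul_mem_left _ _ (I.mul_mem_right _ _ (h a b c)))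
      (I.neg_mem (I.mul_mem_left _ _ (I.mul_mem_right _ _ (h a c b)))))
      (I.mul_mem_left _ _ (I.mul_mem_right _ _ (h a c b))))
      (I.mul_mem_left _ _ (I.mul_mem_right _ _ (h b a c))))
      (I.mul_mem_left _ _ (I.mul_mem_right _ _ (h b a c))))
      (I.neg_mem (I.mul_mem_left _ _ (I.mul_mem_right _ _ (h b a c)))))
      (I.neg_mem (I.mul_mem_left _ _ (I.mul_mem_right _ _ (h b c a)))))
      (I.mul_mem_left _ _ (I.mul_mem_right _ _ (h b c a))))
      (I.mul_mem_left _ _ (I.mul_mem_right _ _ (h a b d))))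
      (I.neg_mem (I.mul_mem_left _ _ (I.mul_mem_right _ _ (h a d b)))))
      (I.mul_mem_left _ _ (I.mul_mem_right _ _ (h a d b))))
      (I.mul_mem_left _ _ (I.mul_mem_right _ _ (h b a d))))
      (I.neg_mem (I.mul_mem_left _ _ (I.mul_mem_right _ _ (h b d a)))))
      (I.mul_mem_left _ _ (I.mul_mem_right _ _ (h b d a))))
      (I.mul_mem_left _ _ (I.mul_mem_right _ _ (h a d c))))
      (I.mul_mem_left _ _ (I.mul_mem_right _ _ (h b d c))))
      (I.mul_mem_left _ _ (I.mul_mem_right _ _ (h (a * b) c d))))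
      (I.neg_mem (I.mul_mem_left _ _ (I.mul_mem_right _ _ (h a (b * c) d)))))
      (I.neg_mem (I.mul_mem_left _ _ (I.mul_mem_right _ _ (h a (b * d) c)))))
      (I.neg_mem (I.mul_mem_left _ _ (I.mul_mem_right _ _ (h b (a * c) d)))))
      (I.neg_mem (I.mul_mem_left _ _ (I.mul_mem_right _ _ (h b (a * d) c))))

lemma E02_mem {A : Type*} [Ring A] (I : TwoSidedIdeal A) (u a b c d : A)
    (h : ∀ x y z : A, brk (brk (brk u x) y) z ∈ I) :
    brk u a * brk (brk b c) d + brk u c * brk (brk b a) d ∈ I := by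
  have cert : brk u a * brk (brk b c) d + brk u c * brk (brk b a) d =
      1 * (brk (brk (brk u a) b) c * d) +
      -(1 * (brk (brk (brk u a) c) b * d)) +
      d * (brk (brk (brk u a) c) b * 1) +
      1 * (brk (brk (brk u b) a) c * d) +
      -(d * (brk (brk (brk u b) a) c * 1)) +
      -(1 * (brk (brk (brk u c) a) b * d)) +
      -(1 * (brk (brk (brk u b) c) a * d)) +
      d * (brk (brk (brk u b) c) a * 1) +
      1 * (brk (brk (brk u c) b) a * d) +
      -(d * (brk (brk (brk u c) b) a * 1)) +
      1 * (brk (brk (brk u a) b) d * c) +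
      -(1 * (brk (brk (brk u a) d) b * c)) +
      c * (brk (brk (brk u a) d) b * 1) +
      1 * (brk (brk (brk u a) d) c * b) +
      -(1 * (brk (brk (brk u c) a) d * b)) +
      1 * (brk (brk (brk u c) d) a * b) +
      -(b * (brk (brk (brk u c) d) a * 1)) +
      -(1 * (brk (brk (brk u c) d) b * a)) +
      1 * (brk (brk (brk u (a * b)) c) d * 1) +
      -(1 * (brk (brk (brk u a) (b * c)) d * 1)) +
      -(1 * (brk (brk (brk u a) (b * d)) c * 1)) +
      1 * (brk (brk (brk u (b * c)) a) d * 1) +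
      -(1 * (brk (brk (brk u b) (a * c)) d * 1)) +
      1 * (brk (brk (brk u c) (a * d)) b * 1) := by
    simp only [brk]; noncomm_ring
  rw [cert]
  exact I.add_mem (I.add_mem (I.add_mem (I.add_mem (I.add_mem (I.add_mem (I.add_mem (I.add_mem (I.add_mem (I.add_mem (I.add_mem (I.add_mem (I.add_mem (I.add_mem (I.add_mem (I.add_mem (I.add_mem (I.add_mem (I.add_mem (I.add_mem (I.add_mem (I.add_mem (I.add_mem (I.mul_mem_left _ _ (I.mul_mem_right _ _ (h a b c)))
      (I.neg_mem (I.mul_mem_left _ _ (I.mul_mem_right _ _ (h a c b)))))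
      (I.mul_mem_left _ _ (I.mul_mem_right _ _ (h a c b))))
      (I.mul_mem_left _ _ (I.mul_mem_right _ _ (h b a c))))
      (I.neg_mem (I.mul_mem_left _ _ (I.mul_mem_right _ _ (h b a c)))))
      (I.neg_mem (I.mul_mem_left _ _ (I.mul_mem_right _ _ (h c a b)))))
      (I.neg_mem (I.mul_mem_left _ _ (I.mul_mem_right _ _ (h b c a)))))
      (I.mul_mem_left _ _ (I.mul_mem_right _ _ (h b c a))))
      (I.mul_mem_left _ _ (I.mul_mem_right _ _ (h c b a))))
      (I.neg_mem (I.mul_mem_left _ _ (I.mul_mem_right _ _ (h c b a)))))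
      (I.mul_mem_left _ _ (I.mul_mem_right _ _ (h a b d))))
      (I.neg_mem (I.mul_mem_left _ _ (I.mul_mem_right _ _ (h a d b)))))
      (I.mul_mem_left _ _ (I.mul_mem_right _ _ (h a d b))))
      (I.mul_mem_left _ _ (I.mul_mem_right _ _ (h a d c))))
      (I.neg_mem (I.mul_mem_left _ _ (I.mul_mem_right _ _ (h c a d)))))
      (I.mul_mem_left _ _ (I.mul_mem_right _ _ (h c d a))))
      (I.neg_mem (I.mul_mem_left _ _ (I.mul_mem_right _ _ (h c d a)))))
      (I.neg_mem (I.mul_mem_left _ _ (I.mul_mem_right _ _ (h c d b)))))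
      (I.mul_mem_left _ _ (I.mul_mem_right _ _ (h (a * b) c d))))
      (I.neg_mem (I.mul_mem_left _ _ (I.mul_mem_right _ _ (h a (b * c) d)))))
      (I.neg_mem (I.mul_mem_left _ _ (I.mul_mem_right _ _ (h a (b * d) c)))))
      (I.mul_mem_left _ _ (I.mul_mem_right _ _ (h (b * c) a d))))
      (I.neg_mem (I.mul_mem_left _ _ (I.mul_mem_right _ _ (h b (a * c) d)))))
      (I.mul_mem_left _ _ (I.mul_mem_right _ _ (h c (a * d) b)))

lemma E03_mem {A : Type*} [Ring A] (I : TwoSidedIdeal A) (u a b c d : A)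
    (h : ∀ x y z : A, brk (brk (brk u x) y) z ∈ I) :
    brk u a * brk (brk b c) d + brk u d * brk (brk b c) a ∈ I := by
  have cert : brk u a * brk (brk b c) d + brk u d * brk (brk b c) a =
      1 * (brk (brk (brk u a) b) c * d) +
      -(1 * (brk (brk (brk u a) c) b * d)) +
      -(1 * (brk (brk (brk u d) a) b * c)) +
      c * (brk (brk (brk u d) a) b * 1) +
      1 * (brk (brk (brk u d) a) c * b) +
      -(b * (brk (brk (brk u d) a) c * 1)) +
      1 * (brk (brk (brk u d) b) c * a) +
      -(1 * (brk (brk (brk u d) c) b * a)) +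
      -(1 * (brk (brk (brk u (a * d)) b) c * 1)) +
      1 * (brk (brk (brk u (a * d)) c) b * 1) := by
    simp only [brk]; noncomm_ring
  rw [cert]
  exact I.add_mem (I.add_mem (I.add_mem (I.add_mem (I.add_mem (I.add_mem (I.add_mem (I.add_mem (I.add_mem (I.mul_mem_left _ _ (I.mul_mem_right _ _ (h a b c)))
      (I.neg_mem (I.mul_mem_left _ _ (I.mul_mem_right _ _ (h a c b)))))
      (I.neg_mem (I.mul_mem_left _ _ (I.mul_mem_right _ _ (h d a b)))))
      (I.mul_mem_left _ _ (I.mul_mem_right _ _ (h d a b))))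
      (I.mul_mem_left _ _ (I.mul_mem_right _ _ (h d a c))))
      (I.neg_mem (I.mul_mem_left _ _ (I.mul_mem_right _ _ (h d a c)))))
      (I.mul_mem_left _ _ (I.mul_mem_right _ _ (h d b c))))
      (I.neg_mem (I.mul_mem_left _ _ (I.mul_mem_right _ _ (h d c b)))))
      (I.neg_mem (I.mul_mem_left _ _ (I.mul_mem_right _ _ (h (a * d) b c)))))
      (I.mul_mem_left _ _ (I.mul_mem_right _ _ (h (a * d) c b)))

lemma E13_mem {A : Type*} [Ring A] (I : TwoSidedIdeal A) (u a b c d : A)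
    (h : ∀ x y z : A, brk (brk (brk u x) y) z ∈ I) :
    brk u a * brk (brk b c) d + brk u a * brk (brk d c) b ∈ I := by
  have cert : brk u a * brk (brk b c) d + brk u a * brk (brk d c) b =
      1 * (brk (brk (brk u a) b) c * d) +
      1 * (brk (brk (brk u a) b) c * d) +
      -(1 * (brk (brk (brk u a) c) b * d)) +
      d * (brk (brk (brk u a) c) b * 1) +
      1 * (brk (brk (brk u b) a) c * d) +
      -(d * (brk (brk (brk u b) a) c * 1)) +
      d * (brk (brk (brk u b) c) a * 1) +
      1 * (brk (brk (brk u a) b) d * c) +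
      c * (brk (brk (brk u a) d) b * 1) +
      c * (brk (brk (brk u b) a) d * 1) +
      c * (brk (brk (brk u d) a) b * 1) +
      1 * (brk (brk (brk u a) d) c * b) +
      1 * (brk (brk (brk u a) d) c * b) +
      -(1 * (brk (brk (brk u c) a) d * b)) +
      b * (brk (brk (brk u c) a) d * 1) +
      1 * (brk (brk (brk u c) d) a * b) +
      -(b * (brk (brk (brk u c) d) a * 1)) +
      b * (brk (brk (brk u d) c) a * 1) +
      1 * (brk (brk (brk u b) d) c * a) +
      a * (brk (brk (brk u d) b) c * 1) +
      1 * (brk (brk (brk u (a * b)) c) d * 1) +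
      -(1 * (brk (brk (brk u (a * b)) d) c * 1)) +
      -(1 * (brk (brk (brk u a) (b * c)) d * 1)) +
      -(1 * (brk (brk (brk u (a * d)) b) c * 1)) +
      -(1 * (brk (brk (brk u a) (b * d)) c * 1)) +
      -(1 * (brk (brk (brk u (a * c)) d) b * 1)) +
      -(1 * (brk (brk (brk u b) (a * c)) d * 1)) +
      -(1 * (brk (brk (brk u (c * d)) a) b * 1)) +
      1 * (brk (brk (brk u c) (a * d)) b * 1) +
      -(1 * (brk (brk (brk u (b * d)) c) a * 1)) := by
    simp only [brk]; noncomm_ring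
  rw [cert]
  exact I.add_mem (I.add_mem (I.add_mem (I.add_mem (I.add_mem (I.add_mem (I.add_mem (I.add_mem (I.add_mem (I.add_mem (I.add_mem (I.add_mem (I.add_mem (I.add_mem (I.add_mem (I.add_mem (I.add_mem (I.add_mem (I.add_mem (I.add_mem (I.add_mem (I.add_mem (I.add_mem (I.add_mem (I.add_mem (I.add_mem (I.add_mem (I.add_mem (I.add_mem (I.mul_mem_left _ _ (I.mul_mem_right _ _ (h a b c)))
      (I.mul_mem_left _ _ (I.mul_mem_right _ _ (h a b c))))
      (I.neg_mem (I.mul_mem_left _ _ (I.mul_mem_right _ _ (h a c b)))))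
      (I.mul_mem_left _ _ (I.mul_mem_right _ _ (h a c b))))
      (I.mul_mem_left _ _ (I.mul_mem_right _ _ (h b a c))))
      (I.neg_mem (I.mul_mem_left _ _ (I.mul_mem_right _ _ (h b a c)))))
      (I.mul_mem_left _ _ (I.mul_mem_right _ _ (h b c a))))
      (I.mul_mem_left _ _ (I.mul_mem_right _ _ (h a b d))))
      (I.mul_mem_left _ _ (I.mul_mem_right _ _ (h a d b))))
      (I.mul_mem_left _ _ (I.mul_mem_right _ _ (h b a d))))
      (I.mul_mem_left _ _ (I.mul_mem_right _ _ (h d a b))))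
      (I.mul_mem_left _ _ (I.mul_mem_right _ _ (h a d c))))
      (I.mul_mem_left _ _ (I.mul_mem_right _ _ (h a d c))))
      (I.neg_mem (I.mul_mem_left _ _ (I.mul_mem_right _ _ (h c a d)))))
      (I.mul_mem_left _ _ (I.mul_mem_right _ _ (h c a d))))
      (I.mul_mem_left _ _ (I.mul_mem_right _ _ (h c d a))))
      (I.neg_mem (I.mul_mem_left _ _ (I.mul_mem_right _ _ (h c d a)))))
      (I.mul_mem_left _ _ (I.mul_mem_right _ _ (h d c a))))
      (I.mul_mem_left _ _ (I.mul_mem_right _ _ (h b d c))))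
      (I.mul_mem_left _ _ (I.mul_mem_right _ _ (h d b c))))
      (I.mul_mem_left _ _ (I.mul_mem_right _ _ (h (a * b) c d))))
      (I.neg_mem (I.mul_mem_left _ _ (I.mul_mem_right _ _ (h (a * b) d c)))))
      (I.neg_mem (I.mul_mem_left _ _ (I.mul_mem_right _ _ (h a (b * c) d)))))
      (I.neg_mem (I.mul_mem_left _ _ (I.mul_mem_right _ _ (h (a * d) b c)))))
      (I.neg_mem (I.mul_mem_left _ _ (I.mul_mem_right _ _ (h a (b * d) c)))))
      (I.neg_mem (I.mul_mem_left _ _ (I.mul_mem_right _ _ (h (a * c) d b)))))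
      (I.neg_mem (I.mul_mem_left _ _ (I.mul_mem_right _ _ (h b (a * c) d)))))
      (I.neg_mem (I.mul_mem_left _ _ (I.mul_mem_right _ _ (h (c * d) a b)))))
      (I.mul_mem_left _ _ (I.mul_mem_right _ _ (h c (a * d) b))))
      (I.neg_mem (I.mul_mem_left _ _ (I.mul_mem_right _ _ (h (b * d) c a))))

lemma E23_mem {A : Type*} [Ring A] (I : TwoSidedIdeal A) (u a b c d : A)
    (h : ∀ x y z : A, brk (brk (brk u x) y) z ∈ I) :
    brk u a * brk (brk b c) d + brk u a * brk (brk b d) c ∈ I := by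
  have cert : brk u a * brk (brk b c) d + brk u a * brk (brk b d) c =
      1 * (brk (brk (brk u a) b) c * d) +
      1 * (brk (brk (brk u a) b) c * d) +
      -(1 * (brk (brk (brk u a) c) b * d)) +
      d * (brk (brk (brk u a) c) b * 1) +
      1 * (brk (brk (brk u b) a) c * d) +
      d * (brk (brk (brk u c) a) b * 1) +
      d * (brk (brk (brk u b) c) a * 1) +
      1 * (brk (brk (brk u a) b) d * c) +
      1 * (brk (brk (brk u a) b) d * c) +
      -(1 * (brk (brk (brk u a) d) b * c)) +
      c * (brk (brk (brk u a) d) b * 1) +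
      1 * (brk (brk (brk u b) a) d * c) +
      c * (brk (brk (brk u d) a) b * 1) +
      c * (brk (brk (brk u b) d) a * 1) +
      1 * (brk (brk (brk u a) c) d * b) +
      1 * (brk (brk (brk u a) d) c * b) +
      1 * (brk (brk (brk u c) d) a * b) +
      b * (brk (brk (brk u d) c) a * 1) +
      1 * (brk (brk (brk u b) c) d * a) +
      1 * (brk (brk (brk u b) d) c * a) +
      a * (brk (brk (brk u c) b) d * 1) +
      a * (brk (brk (brk u d) b) c * 1) +
      -(1 * (brk (brk (brk u (a * c)) b) d * 1)) +
      -(1 * (brk (brk (brk u a) (b * c)) d * 1)) +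
      -(1 * (brk (brk (brk u (a * d)) b) c * 1)) +
      -(1 * (brk (brk (brk u a) (b * d)) c * 1)) +
      -(1 * (brk (brk (brk u b) (a * c)) d * 1)) +
      -(1 * (brk (brk (brk u b) (a * d)) c * 1)) +
      -(1 * (brk (brk (brk u (c * d)) a) b * 1)) +
      -(1 * (brk (brk (brk u (b * c)) d) a * 1)) +
      -(1 * (brk (brk (brk u (b * d)) c) a * 1)) := by
    simp only [brk]; noncomm_ring
  rw [cert]
  exact I.add_mem (I.add_mem (I.add_mem (I.add_mem (I.add_mem (I.add_mem (I.add_mem (I.add_mem (I.add_mem (I.add_mem (I.add_mem (I.add_mem (I.add_mem (I.add_mem (I.add_mem (I.add_mem (I.add_mem (I.add_mem (I.add_mem (I.add_mem (I.add_mem (I.add_mem (I.add_mem (I.add_mem (I.add_mem (I.add_mem (I.add_mem (I.add_mem (I.add_mem (I.add_mem (I.mul_mem_left _ _ (I.mul_mem_right _ _ (h a b c)))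
      (I.mul_mem_left _ _ (I.mul_mem_right _ _ (h a b c))))
      (I.neg_mem (I.mul_mem_left _ _ (I.mul_mem_right _ _ (h a c b)))))
      (I.mul_mem_left _ _ (I.mul_mem_right _ _ (h a c b))))
      (I.mul_mem_left _ _ (I.mul_mem_right _ _ (h b a c))))
      (I.mul_mem_left _ _ (I.mul_mem_right _ _ (h c a b))))
      (I.mul_mem_left _ _ (I.mul_mem_right _ _ (h b c a))))
      (I.mul_mem_left _ _ (I.mul_mem_right _ _ (h a b d))))
      (I.mul_mem_left _ _ (I.mul_mem_right _ _ (h a b d))))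
      (I.neg_mem (I.mul_mem_left _ _ (I.mul_mem_right _ _ (h a d b)))))
      (I.mul_mem_left _ _ (I.mul_mem_right _ _ (h a d b))))
      (I.mul_mem_left _ _ (I.mul_mem_right _ _ (h b a d))))
      (I.mul_mem_left _ _ (I.mul_mem_right _ _ (h d a b))))
      (I.mul_mem_left _ _ (I.mul_mem_right _ _ (h b d a))))
      (I.mul_mem_left _ _ (I.mul_mem_right _ _ (h a c d))))
      (I.mul_mem_left _ _ (I.mul_mem_right _ _ (h a d c))))
      (I.mul_mem_left _ _ (I.mul_mem_right _ _ (h c d a))))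
      (I.mul_mem_left _ _ (I.mul_mem_right _ _ (h d c a))))
      (I.mul_mem_left _ _ (I.mul_mem_right _ _ (h b c d))))
      (I.mul_mem_left _ _ (I.mul_mem_right _ _ (h b d c))))
      (I.mul_mem_left _ _ (I.mul_mem_right _ _ (h c b d))))
      (I.mul_mem_left _ _ (I.mul_mem_right _ _ (h d b c))))
      (I.neg_mem (I.mul_mem_left _ _ (I.mul_mem_right _ _ (h (a * c) b d)))))
      (I.neg_mem (I.mul_mem_left _ _ (I.mul_mem_right _ _ (h a (b * c) d)))))
      (I.neg_mem (I.mul_mem_left _ _ (I.mul_mem_right _ _ (h (a * d) b c)))))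
      (I.neg_mem (I.mul_mem_left _ _ (I.mul_mem_right _ _ (h a (b * d) c)))))
      (I.neg_mem (I.mul_mem_left _ _ (I.mul_mem_right _ _ (h b (a * c) d)))))
      (I.neg_mem (I.mul_mem_left _ _ (I.mul_mem_right _ _ (h b (a * d) c)))))
      (I.neg_mem (I.mul_mem_left _ _ (I.mul_mem_right _ _ (h (c * d) a b)))))
      (I.neg_mem (I.mul_mem_left _ _ (I.mul_mem_right _ _ (h (b * c) d a)))))
      (I.neg_mem (I.mul_mem_left _ _ (I.mul_mem_right _ _ (h (b * d) c a))))

lemma E12_mem {A : Type*} [Ring A] (I : TwoSidedIdeal A) (u a b c d : A) :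
    brk u a * brk (brk c b) d + brk u a * brk (brk b c) d ∈ I := by
  have cert : brk u a * brk (brk c b) d + brk u a * brk (brk b c) d = 0 := by
    simp only [brk]; noncomm_ring
  rw [cert]; exact I.zero_mem

lemma lnc_snoc {A : Type*} [NonUnitalNonAssocRing A] {n : ℕ} (v : Fin (n + 1) → A) (x : A) :
    lnc (Fin.snoc v x) = brk (lnc v) x := by
  show lnc (Fin.snoc v x : Fin (n + 2) → A) = _
  rw [lnc, Fin.init_snoc, Fin.snoc_last]

lemma lnc_three {A : Type*} [NonUnitalNonAssocRing A] (x y z : A) :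
    lnc ![x, y, z] = brk (brk x y) z := by
  have h1 : Fin.init ![x, y, z] = ![x, y] := by
    funext i; fin_cases i <;> rfl
  have h2 : Fin.init ![x, y] = ![x] := by
    funext i; fin_cases i <;> rfl
  rw [show (![x, y, z] : Fin 3 → A) = (![x, y, z] : Fin (1 + 2) → A) from rfl]
  simp [lnc, h1, h2]

lemma lnc_mem_T {A : Type*} [NonUnitalNonAssocRing A] {m : ℕ} (a : Fin m → A) :
    lnc a ∈ T A m :=
  TwoSidedIdeal.subset_span ⟨a, rfl⟩

lemma key_swap {A : Type*} [Ring A] (I : TwoSidedIdeal A) (u : A)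
    (h : ∀ x y z : A, brk (brk (brk u x) y) z ∈ I) (x y : Fin 4) (hxy : x ≠ y)
    (f : Fin 4 → A) :
    brk u (f (Equiv.swap x y 0)) *
        brk (brk (f (Equiv.swap x y 1)) (f (Equiv.swap x y 2))) (f (Equiv.swap x y 3))
      + brk u (f 0) * brk (brk (f 1) (f 2)) (f 3) ∈ I := by
  fin_cases x <;> fin_cases y
  · exact absurd rfl hxy
  · exact E01_mem I u (f 1) (f 0) (f 2) (f 3) h
  · exact E02_mem I u (f 2) (f 1) (f 0) (f 3) h
  · exact E03_mem I u (f 3) (f 1) (f 2) (f 0) h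
  · exact E01_mem I u (f 1) (f 0) (f 2) (f 3) h
  · exact absurd rfl hxy
  · exact E12_mem I u (f 0) (f 1) (f 2) (f 3)
  · exact E13_mem I u (f 0) (f 3) (f 2) (f 1) h
  · exact E02_mem I u (f 2) (f 1) (f 0) (f 3) h
  · exact E12_mem I u (f 0) (f 1) (f 2) (f 3)
  · exact absurd rfl hxy
  · exact E23_mem I u (f 0) (f 1) (f 3) (f 2) h
  · exact E03_mem I u (f 3) (f 1) (f 2) (f 0) h
  · exact E13_mem I u (f 0) (f 3) (f 2) (f 1) h
  · exact E23_mem I u (f 0) (f 1) (f 3) (f 2) h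
  · exact absurd rfl hxy

lemma main_aux {A : Type*} [Ring A] (I : TwoSidedIdeal A) (u : A)
    (h : ∀ x y z : A, brk (brk (brk u x) y) z ∈ I) (σ : Equiv.Perm (Fin 4)) :
    ∀ f : Fin 4 → A,
      brk u (f (σ 0)) * brk (brk (f (σ 1)) (f (σ 2))) (f (σ 3))
        - (Equiv.Perm.sign σ : ℤ) • (brk u (f 0) * brk (brk (f 1) (f 2)) (f 3)) ∈ I := by
  have hsmul : ∀ (s : ℤˣ) (w : A), w ∈ I → ((s : ℤ) • w) ∈ I := by
    intro s w hw
    rcases Int.units_eq_one_or s with hs | hs <;> rw [hs]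
    · simpa using hw
    · simpa using I.neg_mem hw
  refine Equiv.Perm.swap_induction_on σ ?_ ?_
  · intro f
    simpa [Equiv.Perm.sign_one] using I.zero_mem
  · intro π x y hxy ih f
    have ih' := ih (f ∘ Equiv.swap x y)
    simp only [Function.comp_apply] at ih'
    have hq := key_swap I u h x y hxy f
    simp only [Equiv.Perm.mul_apply, Equiv.Perm.sign_mul, Equiv.Perm.sign_swap hxy,
      Units.val_mul, Units.val_neg, Units.val_one, neg_one_mul, neg_smul, sub_neg_eq_add]
    have heq :
        brk u (f (Equiv.swap x y (π 0))) *
            brk (brk (f (Equiv.swap x y (π 1))) (f (Equiv.swap x y (π 2))))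
              (f (Equiv.swap x y (π 3)))
          + ((Equiv.Perm.sign π : ℤ)) • (brk u (f 0) * brk (brk (f 1) (f 2)) (f 3))
        = (brk u (f (Equiv.swap x y (π 0))) *
            brk (brk (f (Equiv.swap x y (π 1))) (f (Equiv.swap x y (π 2))))
              (f (Equiv.swap x y (π 3)))
            - (Equiv.Perm.sign π : ℤ) • (brk u (f (Equiv.swap x y 0)) *
                brk (brk (f (Equiv.swap x y 1)) (f (Equiv.swap x y 2))) (f (Equiv.swap x y 3))))
          + (Equiv.Perm.sign π : ℤ) • (brk u (f (Equiv.swap x y 0)) *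
                brk (brk (f (Equiv.swap x y 1)) (f (Equiv.swap x y 2))) (f (Equiv.swap x y 3))
              + brk u (f 0) * brk (brk (f 1) (f 2)) (f 3)) := by
      rw [smul_add]; abel
    rw [heq]
    exact I.add_mem ih' (hsmul _ _ hq)

theorem aux_final {A : Type*} [Ring A] (m : ℕ) (σ : Equiv.Perm (Fin 4))
    (g : Fin (m + 1) → A) (f : Fin 4 → A) :
    lnc (Fin.snoc g (f (σ 0))) * lnc ![f (σ 1), f (σ 2), f (σ 3)]
      - (Equiv.Perm.sign σ : ℤ) • (lnc (Fin.snoc g (f 0)) * lnc ![f 1, f 2, f 3])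
      ∈ T A (m + 4) := by
  have hmem : ∀ x y z : A, brk (brk (brk (lnc g) x) y) z ∈ T A (m + 4) := by
    intro x y z
    have e : brk (brk (brk (lnc g) x) y) z
        = lnc (Fin.snoc (Fin.snoc (Fin.snoc g x) y) z) := by
      rw [lnc_snoc, lnc_snoc, lnc_snoc]
    rw [e]
    exact lnc_mem_T _
  rw [lnc_snoc, lnc_snoc, lnc_three, lnc_three]
  exact main_aux (T A (m + 4)) (lnc g) hmem σ f

theorem comm_mul_comm3_perm_sign_mem {A : Type*} [Ring A] (k : ℕ) (hk : 1 < k)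
    (σ : Equiv.Perm (Fin 4)) (g : Fin (k - 1) → A) (f : Fin 4 → A) :
    lnc (Fin.snoc g (f (σ 0))) * lnc ![f (σ 1), f (σ 2), f (σ 3)]
      - (Equiv.Perm.sign σ : ℤ) • (lnc (Fin.snoc g (f 0)) * lnc ![f 1, f 2, f 3])
      ∈ T A (k + 2) := by
  obtain ⟨m, rfl⟩ : ∃ m, k = m + 2 := ⟨k - 2, by omega⟩
  exact aux_final m σ g f
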